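/- arXiv:2403.03867 — 4 statements merged into one kernel-verified Lean document; each statement's English description precedes it below -/
import Mathlib

section
/- With updates u_{t+1}=u_t+ηL(t)v_t, v_{t+1}=v_t+ηL(t)u_t where L(t)=exp(-⟨u_t,v_t⟩): if 0 < ηL(t) < 1 and u_t + v_t ≠ 0, then ⟨u_{t+1},v_{t+1}⟩ > ⟨u_t,v_t⟩. -/
/-- If `0 < ηL(t) < 1` and `uₜ + vₜ ≠ 0`, the inner product `⟨uₜ,vₜ⟩` strictly
increases after one gradient descent step on `L(u,v) = exp(-⟨u,v⟩)`. -/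
theorem gd_inner_increases (d : ℕ) (η : ℝ)
    (u v u' v' : EuclideanSpace ℝ (Fin d))
    (L : ℝ) (hL : L = Real.exp (-(inner ℝ u v : ℝ)))
    (hu : u' = u + (η * L) • v)
    (hv : v' = v + (η * L) • u)
    (hstep : 0 < η * L) (hstep' : η * L < 1)
    (hsum : u + v ≠ 0) :
    (inner ℝ u' v' : ℝ) > (inner ℝ u v : ℝ) := by
  subst hu hv
  set a := η * L with ha
  have hexp : (inner ℝ (u + a • v) (v + a • u) : ℝ)
      = inner ℝ u v + a * (inner ℝ u u) + a * (inner ℝ v v) + a * a * inner ℝ u v := by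
    simp only [inner_add_left, inner_add_right, real_inner_smul_left,
      real_inner_smul_right, real_inner_comm v u]
    ring
  have hnorm : ‖u + v‖ ^ 2 = inner ℝ u u + 2 * inner ℝ u v + (inner ℝ v v : ℝ) := by
    rw [← real_inner_self_eq_norm_sq]
    simp only [inner_add_left, inner_add_right, real_inner_comm v u]
    ring
  have hpos : 0 < ‖u + v‖ ^ 2 := by
    have := norm_pos_iff.mpr hsum
    positivity
  rw [hnorm] at hpos
  rw [hexp]
  rcases le_or_gt (inner ℝ u v : ℝ) 0 with hp | hp
  · nlinarith [mul_pos hstep hpos, mul_nonneg (le_of_lt hstep)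
      (mul_nonneg (by linarith : (0:ℝ) ≤ 2 - a) (neg_nonneg.mpr hp))]
  · nlinarith [mul_pos hstep hp, mul_nonneg (le_of_lt hstep)
      (real_inner_self_nonneg (x := u)),
      mul_nonneg (le_of_lt hstep) (real_inner_self_nonneg (x := v)),
      real_inner_le_norm u v, sq_nonneg (‖u‖ - ‖v‖),
      real_inner_self_eq_norm_sq u, real_inner_self_eq_norm_sq v]
end

section
/- Let C = {0,1}^m, fix a concept index i, and let g : C → ℝ^d, f : D → ℝ^d where D̂ = {d ∈ {⋄,0,1}^m : d_i = ⋄}. Suppose for every c ∈ C and d ∈ D̂, ln(p̂(c_{i→0}|d)/p̂(c_{i→1}|d)) = α for a constant α independent of c and d, where p̂(c|d) = softmax(f(d)^T g(c)). Let Π_i be the orthogonal projection onto span{f(d) : d ∈ D̂}. Then the vectors Π_i(g(c_{i→1}) − g(c_{i→0})) over all c ∈ C are pairwise parallel (each equals α times a fixed vector independent of c). -/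
/-- Log-odds matching implies linearity: if for every concept vector `c` and every
context `d` not conditioning on concept `i`, the learned log-odds of concept `i`
equal a constant `α`, then the projections onto `span{f d : d i = ⋄}` of the
steering vectors `g(c_{i→1}) − g(c_{i→0})` are pairwise parallel (each equals
`α` times a fixed vector independent of `c`). -/
theorem log_odds_implies_linearity (n m : ℕ) (i : Fin m)
    (f : (Fin m → Option Bool) → EuclideanSpace ℝ (Fin n))
    (g : (Fin m → Bool) → EuclideanSpace ℝ (Fin n))
    (phat : (Fin m → Option Bool) → (Fin m → Bool) → ℝ)
    (hphat : ∀ d c, phat d c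
      = Real.exp (inner ℝ (f d) (g c) : ℝ) / ∑ c', Real.exp (inner ℝ (f d) (g c') : ℝ))
    (α : ℝ)
    (hlogodds : ∀ (c : Fin m → Bool) (d : Fin m → Option Bool), d i = none →
      Real.log (phat d (Function.update c i false) / phat d (Function.update c i true)) = α)
    (S : Submodule ℝ (EuclideanSpace ℝ (Fin n)))
    (hS : S = Submodule.span ℝ (f '' {d | d i = none})) :
    ∃ w : EuclideanSpace ℝ (Fin n), ∀ c : Fin m → Bool,
      (S.orthogonalProjection
        (g (Function.update c i true) - g (Function.update c i false)) :
          EuclideanSpace ℝ (Fin n)) = α • w := by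
  -- Key inner product identity
  have key : ∀ (c : Fin m → Bool) (d : Fin m → Option Bool), d i = none →
      (inner ℝ (f d) (g (Function.update c i false)) : ℝ)
        - inner ℝ (f d) (g (Function.update c i true)) = α := by
    intro c d hd
    have h := hlogodds c d hd
    rw [hphat, hphat] at h
    set Z : ℝ := ∑ c', Real.exp (inner ℝ (f d) (g c') : ℝ) with hZdef
    have hZ : 0 < Z := Finset.sum_pos (fun _ _ => Real.exp_pos _) Finset.univ_nonempty
    set a : ℝ := (inner ℝ (f d) (g (Function.update c i false)) : ℝ)
    set b : ℝ := (inner ℝ (f d) (g (Function.update c i true)) : ℝ)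
    have hq : Real.exp a / Z / (Real.exp b / Z) = Real.exp (a - b) := by
      rw [Real.exp_sub]; field_simp
    rw [hq, Real.log_exp] at h
    exact h
  -- the difference of steering vectors for two c's is orthogonal to S
  set u : (Fin m → Bool) → EuclideanSpace ℝ (Fin n) := fun c =>
    g (Function.update c i true) - g (Function.update c i false) with hu
  set c₀ : Fin m → Bool := fun _ => false with hc₀
  have horth : ∀ c, u c - u c₀ ∈ Sᗮ := by
    intro c
    rw [hS, Submodule.mem_orthogonal]
    intro x hx
    induction hx using Submodule.span_induction with
    | mem x hx =>
      obtain ⟨d, hd, rfl⟩ := hx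
      have h1 := key c d hd
      have h2 := key c₀ d hd
      simp only [u, inner_sub_right]
      linarith
    | zero => simp
    | add x y _ _ hx hy => rw [inner_add_left, hx, hy, add_zero]
    | smul r x _ hx => rw [inner_smul_left, hx, mul_zero]
  have hproj : ∀ c, (S.orthogonalProjection (u c) : EuclideanSpace ℝ (Fin n))
      = S.orthogonalProjection (u c₀) := by
    intro c
    have : S.orthogonalProjection (u c - u c₀) = 0 :=
      Submodule.orthogonalProjectionOnto_apply_of_mem_orthogonal (horth c)
    have h := map_sub S.orthogonalProjection (u c) (u c₀)
    rw [this] at h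
    have := sub_eq_zero.mp h.symm
    exact_mod_cast congrArg (Subtype.val) this
  by_cases hα : α = 0
  · refine ⟨0, fun c => ?_⟩
    have h0 : u c₀ ∈ Sᗮ := by
      rw [hS, Submodule.mem_orthogonal]
      intro x hx
      induction hx using Submodule.span_induction with
      | mem x hx =>
        obtain ⟨d, hd, rfl⟩ := hx
        have h1 := key c₀ d hd
        simp only [u, inner_sub_right]
        rw [hα] at h1
        linarith
      | zero => simp
      | add x y _ _ hx hy => rw [inner_add_left, hx, hy, add_zero]
      | smul r x _ hx => rw [inner_smul_left, hx, mul_zero]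
    rw [hproj c]
    rw [Submodule.orthogonalProjectionOnto_apply_of_mem_orthogonal h0]
    simp
  · refine ⟨α⁻¹ • (S.orthogonalProjection (u c₀) : EuclideanSpace ℝ (Fin n)),
      fun c => ?_⟩
    rw [hproj c, smul_smul, mul_inv_cancel₀ hα, one_smul]
end

section
/- Consider the coupled recursions V_{t+1} = V_t + Kηℓ_t Δ_t and Δ_{t+1} = Δ_t + 2ηℓ_t V_t in ℝ^d with ℓ_t > 0, η > 0, K > 0. Define q_t² = ‖V_t‖²/‖Δ_t‖² (assuming ⟨V_t, Δ_t⟩ > 0 and both nonzero). If q_t² < K/2 then q_{t+1}² > q_t², and if q_t² > K/2 then q_{t+1}² < q_t². -/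
/-- For the coupled recursions `V' = V + KηℓΔ`, `Δ' = Δ + 2ηℓV` with positive
scalars and `⟨V,Δ⟩ > 0`, the ratio `q² = ‖V‖²/‖Δ‖²` moves toward `K/2`:
it increases when below `K/2` and decreases when above. -/
theorem ratio_moves_to_half_K (n : ℕ) (η ℓ K : ℝ)
    (hη : 0 < η) (hℓ : 0 < ℓ) (hK : 0 < K)
    (V Δ V' Δ' : EuclideanSpace ℝ (Fin n))
    (hVne : V ≠ 0) (hΔne : Δ ≠ 0)
    (hipos : (0 : ℝ) < (inner ℝ V Δ : ℝ))
    (hV' : V' = V + (K * η * ℓ) • Δ)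
    (hΔ' : Δ' = Δ + (2 * η * ℓ) • V) :
    (‖V‖ ^ 2 / ‖Δ‖ ^ 2 < K / 2 → ‖V'‖ ^ 2 / ‖Δ'‖ ^ 2 > ‖V‖ ^ 2 / ‖Δ‖ ^ 2)
    ∧ (‖V‖ ^ 2 / ‖Δ‖ ^ 2 > K / 2 → ‖V'‖ ^ 2 / ‖Δ'‖ ^ 2 < ‖V‖ ^ 2 / ‖Δ‖ ^ 2) := by
  have ha : (0:ℝ) < ‖V‖ ^ 2 := pow_pos (norm_pos_iff.mpr hVne) 2
  have hc : (0:ℝ) < ‖Δ‖ ^ 2 := pow_pos (norm_pos_iff.mpr hΔne) 2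
  have hs : (0:ℝ) < (inner ℝ V Δ : ℝ) := hipos
  have hnV' : ‖V'‖ ^ 2 = ‖V‖ ^ 2 + 2 * (K * η * ℓ) * (inner ℝ V Δ : ℝ)
      + (K * η * ℓ) ^ 2 * ‖Δ‖ ^ 2 := by
    rw [hV', norm_add_sq_real, real_inner_smul_right, norm_smul, Real.norm_eq_abs,
      abs_of_pos (by positivity), mul_pow]
    ring
  have hnΔ' : ‖Δ'‖ ^ 2 = ‖Δ‖ ^ 2 + 2 * (2 * η * ℓ) * (inner ℝ V Δ : ℝ)
      + (2 * η * ℓ) ^ 2 * ‖V‖ ^ 2 := by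
    rw [hΔ', norm_add_sq_real, real_inner_smul_right, real_inner_comm, norm_smul,
      Real.norm_eq_abs, abs_of_pos (by positivity), mul_pow]
    ring
  have hd' : (0:ℝ) < ‖Δ'‖ ^ 2 := by
    rw [hnΔ']; positivity
  constructor
  · intro h
    rw [gt_iff_lt, div_lt_div_iff₀ hc hd']
    rw [div_lt_div_iff₀ hc (by norm_num : (0:ℝ) < 2)] at h
    rw [hnV', hnΔ']
    have hfac : 0 < (K * ‖Δ‖ ^ 2 - 2 * ‖V‖ ^ 2) *
        (2 * (η * ℓ) * (inner ℝ V Δ : ℝ) + (η * ℓ) ^ 2 * (K * ‖Δ‖ ^ 2 + 2 * ‖V‖ ^ 2)) := by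
      apply mul_pos (by linarith)
      have := mul_pos (mul_pos hη hℓ) hs
      nlinarith [sq_nonneg (η * ℓ), mul_pos (mul_pos (mul_pos hη hℓ) (mul_pos hη hℓ)) (mul_pos hK hc)]
    nlinarith [hfac]
  · intro h
    rw [gt_iff_lt, div_lt_div_iff₀ (by norm_num : (0:ℝ) < 2) hc] at h
    rw [div_lt_div_iff₀ hd' hc]
    rw [hnV', hnΔ']
    have hfac : 0 < (2 * ‖V‖ ^ 2 - K * ‖Δ‖ ^ 2) *
        (2 * (η * ℓ) * (inner ℝ V Δ : ℝ) + (η * ℓ) ^ 2 * (K * ‖Δ‖ ^ 2 + 2 * ‖V‖ ^ 2)) := by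
      apply mul_pos (by linarith)
      have := mul_pos (mul_pos hη hℓ) hs
      nlinarith [sq_nonneg (η * ℓ), mul_pos (mul_pos (mul_pos hη hℓ) (mul_pos hη hℓ)) (mul_pos hK hc)]
    nlinarith [hfac]
end

section
/- Let u_{t+1} = u_t + ηL(t)v_t, v_{t+1} = v_t + ηL(t)u_t with L(t) = exp(-⟨u_t,v_t⟩) and suppose ⟨u_t,v_t⟩ > 0 for all t ≥ t_p, and 0 < ηL(t) < 1. If L(t) ≥ c₁ > 0 for all t ≥ t_p, then ⟨u_T, v_T⟩ ≥ ⟨u_{t_p}, v_{t_p}⟩ + (T − t_p)·η²c₁²⟨u_{t_p}, v_{t_p}⟩, so ⟨u_T, v_T⟩ → ∞ as T → ∞. Consequently L(t) → 0 (since L(t) bounded away from 0 yields the contradiction exp(−⟨u_T,v_T⟩) → 0 < c₁). -/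
open Filter

/-- If along the gradient descent iterates on `L(u,v) = exp(-⟨u,v⟩)` one has
`⟨uₜ,vₜ⟩ > 0`, `0 < ηL(t) < 1` and `L(t) ≥ c₁ > 0` for all `t ≥ t_p`, then
`⟨u_T,v_T⟩ ≥ ⟨u_{t_p},v_{t_p}⟩ + (T − t_p)η²c₁²⟨u_{t_p},v_{t_p}⟩`, hence
`⟨u_T,v_T⟩ → ∞`; consequently `L(t) → 0`. -/
theorem loss_tendsto_zero (d : ℕ) (η : ℝ)
    (u v : ℕ → EuclideanSpace ℝ (Fin d))
    (L : ℕ → ℝ) (hLdef : ∀ t, L t = Real.exp (-(inner ℝ (u t) (v t) : ℝ)))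
    (hu : ∀ t, u (t + 1) = u t + (η * L t) • v t)
    (hv : ∀ t, v (t + 1) = v t + (η * L t) • u t)
    (tp : ℕ)
    (hipos : ∀ t ≥ tp, (0 : ℝ) < (inner ℝ (u t) (v t) : ℝ))
    (hstep : ∀ t ≥ tp, 0 < η * L t ∧ η * L t < 1)
    (c₁ : ℝ) (hc₁ : 0 < c₁) (hLlb : ∀ t ≥ tp, c₁ ≤ L t) :
    (∀ T ≥ tp, (inner ℝ (u T) (v T) : ℝ)
        ≥ (inner ℝ (u tp) (v tp) : ℝ)
          + ((T : ℝ) - (tp : ℝ)) * η ^ 2 * c₁ ^ 2 * (inner ℝ (u tp) (v tp) : ℝ))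
    ∧ Tendsto (fun t => (inner ℝ (u t) (v t) : ℝ)) atTop atTop
    ∧ Tendsto L atTop (nhds 0) := by
  set ip : ℕ → ℝ := fun t => (inner ℝ (u t) (v t) : ℝ) with hip
  have hLpos : ∀ t, 0 < L t := fun t => (hLdef t) ▸ Real.exp_pos _
  have hη : 0 < η := by
    have := (hstep tp le_rfl).1
    nlinarith [hLpos tp]
  -- increment identity
  have hinc : ∀ t, ip (t + 1) = ip t + (η * L t) * (‖u t‖ ^ 2 + ‖v t‖ ^ 2)
      + (η * L t) ^ 2 * ip t := by
    intro t
    have h : (inner ℝ (u t + (η * L t) • v t) (v t + (η * L t) • u t) : ℝ)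
        = ip t + (η * L t) * (‖u t‖ ^ 2 + ‖v t‖ ^ 2) + (η * L t) ^ 2 * ip t := by
      simp only [inner_add_left, inner_add_right, real_inner_smul_left,
        real_inner_smul_right, real_inner_self_eq_norm_sq,
        real_inner_comm (v t) (u t), hip]
      ring
    simp only [hip, hu t, hv t]
    exact h
  -- one-step lower bound for t ≥ tp
  have hstep' : ∀ t ≥ tp, ip t + (η * c₁) ^ 2 * ip t ≤ ip (t + 1) := by
    intro t ht
    have hLc := hLlb t ht
    have hpos := hipos t ht
    have h1 : (η * c₁) ^ 2 ≤ (η * L t) ^ 2 := by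
      have h := mul_le_mul_of_nonneg_left hLc hη.le
      exact pow_le_pow_left₀ (by positivity) h 2
    have h2 : 0 ≤ (η * L t) * (‖u t‖ ^ 2 + ‖v t‖ ^ 2) := by
      have := (hstep t ht).1
      positivity
    rw [hinc t]; nlinarith
  -- main bound by induction
  have hmain : ∀ n : ℕ, ip (tp + n) ≥ ip tp + (n : ℝ) * η ^ 2 * c₁ ^ 2 * ip tp := by
    intro n
    induction n with
    | zero => simp
    | succ n ih =>
      have ht : tp ≤ tp + n := Nat.le_add_right _ _
      have h1 := hstep' (tp + n) ht
      have h2 : 0 < ip tp := hipos tp le_rfl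
      have h3 : 0 ≤ (η * c₁) ^ 2 * ip (tp + n) := by
        have := hipos (tp + n) ht
        positivity
      have h4 : 0 ≤ (n : ℝ) * η ^ 2 * c₁ ^ 2 * ip tp := by positivity
      have : ip tp ≤ ip (tp + n) := by linarith
      push_cast
      have heq : tp + (n + 1) = (tp + n) + 1 := by ring
      rw [heq]
      nlinarith
  have hbound : ∀ T ≥ tp, ip T ≥ ip tp + ((T : ℝ) - (tp : ℝ)) * η ^ 2 * c₁ ^ 2 * ip tp := by
    intro T hT
    obtain ⟨n, rfl⟩ := Nat.exists_eq_add_of_le hT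
    have := hmain n
    push_cast
    linarith [hmain n]
  have h2 : 0 < ip tp := hipos tp le_rfl
  have hc : 0 < η ^ 2 * c₁ ^ 2 * ip tp := by positivity
  have htend : Tendsto ip atTop atTop := by
    have hlin : Tendsto (fun T : ℕ => ip tp - (tp : ℝ) * (η ^ 2 * c₁ ^ 2 * ip tp)
        + (T : ℝ) * (η ^ 2 * c₁ ^ 2 * ip tp)) atTop atTop :=
      tendsto_atTop_add_const_left atTop _
        (Tendsto.atTop_mul_const hc (tendsto_natCast_atTop_atTop (R := ℝ)))
    apply tendsto_atTop_mono' _ _ hlin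
    filter_upwards [eventually_ge_atTop tp] with T hT
    have := hbound T hT
    beta_reduce at this ⊢
    nlinarith
  refine ⟨hbound, htend, ?_⟩
  have : Tendsto (fun t => -ip t) atTop atBot := tendsto_neg_atTop_atBot.comp htend
  have h := Real.tendsto_exp_atBot.comp this
  have heq : (fun t => Real.exp (-ip t)) = L := by
    funext t; rw [hLdef t]
  exact heq ▸ h
end
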